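/- Let T be a tree with ℓ ≥ 2 leaves in which each heavy vertex has at least one light neighbor. Let S be the set of heavy vertices of T having exactly one light neighbor, let h be the number of heavy edges of T, let s = |S|, and let t be the size of a maximum matching of the subgraph of T induced by S. Then P(T) = ℓ − h + s − t − 1. -/

import Mathlib

namespace PaperPC

open SimpleGraph

variable {V : Type*}

/-- The degree of a vertex, via the cardinality of its neighbor set. -/
noncomputable def ndeg (G : SimpleGraph V) (v : V) : ℕ := (G.neighborSet v).ncard

/-- A linear forest: an acyclic graph of maximum degree at most 2,
i.e. a vertex-disjoint union of paths.  A spanning linear subforest of `G`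
is exactly a path covering of `G` (isolated vertices are one-vertex paths). -/
def IsLinearForest (H : SimpleGraph V) : Prop :=
  H.IsAcyclic ∧ ∀ v, ndeg H v ≤ 2

/-- The number of paths of a path covering = number of connected components. -/
noncomputable def numPaths (H : SimpleGraph V) : ℕ := Nat.card H.ConnectedComponent

/-- The path covering number `P(G)`. -/
noncomputable def pathCoverNumber (G : SimpleGraph V) : ℕ :=
  sInf {k | ∃ H ≤ G, IsLinearForest H ∧ numPaths H = k}

/-- `H` is a minimum path covering of `G`. -/
def IsMinPathCover (G H : SimpleGraph V) : Prop :=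
  H ≤ G ∧ IsLinearForest H ∧ numPaths H = pathCoverNumber G

open scoped Classical in
/-- The path sequence of a path covering: the multiset of the numbers of vertices
of its paths (a multiset encodes the nondecreasing ordered sequence). -/
noncomputable def pathSeq [Fintype V] (H : SimpleGraph V) : Multiset ℕ :=
  (Finset.univ : Finset H.ConnectedComponent).val.map fun c => c.supp.ncard

/-- `G` admits a unique path sequence. -/
def UniquePathSequence [Fintype V] (G : SimpleGraph V) : Prop :=
  ∀ H₁ H₂ : SimpleGraph V, IsMinPathCover G H₁ → IsMinPathCover G H₂ →
    pathSeq H₁ = pathSeq H₂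

/-- Number of leaves (vertices of degree 1). -/
noncomputable def numLeaves (G : SimpleGraph V) : ℕ := {v | ndeg G v = 1}.ncard

/-- Number of heavy edges (edges both of whose endpoints have degree > 2). -/
noncomputable def numHeavyEdges (G : SimpleGraph V) : ℕ :=
  {e ∈ G.edgeSet | ∀ v ∈ e, 2 < ndeg G v}.ncard

/-- Number of edges. -/
noncomputable def numEdges (G : SimpleGraph V) : ℕ := G.edgeSet.ncard

/-- A graph is 2-sparse if no two adjacent vertices both have degree > 2. -/
def TwoSparse (G : SimpleGraph V) : Prop :=
  ∀ u v, G.Adj u v → ndeg G u ≤ 2 ∨ ndeg G v ≤ 2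

/-- `G` is a path graph. -/
def IsPathGraph (G : SimpleGraph V) : Prop := G.IsTree ∧ ∀ v, ndeg G v ≤ 2

/-- `G` is a cycle graph. -/
def IsCycleGraph (G : SimpleGraph V) : Prop := G.Connected ∧ ∀ v, ndeg G v = 2

/-- A generalized star: a tree with exactly one heavy vertex (the center) in which
all vines have the same number of vertices (equivalently, all leaves are at the same
distance from the center). -/
def IsGenStar (G : SimpleGraph V) : Prop :=
  G.IsTree ∧ ∃ c k, 2 < ndeg G c ∧ (∀ v, v ≠ c → ndeg G v ≤ 2) ∧
    ∀ v, ndeg G v = 1 → G.dist c v = k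

/-- An L(2,1)-labeling. -/
def IsL21Labeling (G : SimpleGraph V) (f : V → ℕ) : Prop :=
  (∀ u v, G.Adj u v → 2 ≤ Nat.dist (f u) (f v)) ∧
  (∀ u v, G.dist u v = 2 → 1 ≤ Nat.dist (f u) (f v))

/-- `λ(G)`: the least `k` such that `G` has an L(2,1)-labeling with labels in `{0,…,k}`. -/
noncomputable def lambdaNum (G : SimpleGraph V) : ℕ :=
  sInf {k | ∃ f : V → ℕ, IsL21Labeling G f ∧ ∀ v, f v ≤ k}

/-- A λ-labeling: an L(2,1)-labeling with maximum label `λ(G)`. -/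
def IsLambdaLabeling (G : SimpleGraph V) (f : V → ℕ) : Prop :=
  IsL21Labeling G f ∧ (∀ v, f v ≤ lambdaNum G) ∧ ∃ v, f v = lambdaNum G

/-- The set of holes of a labeling: unused labels `h` with `1 ≤ h ≤ λ(G) - 1`. -/
def labHoles (G : SimpleGraph V) (f : V → ℕ) : Set ℕ :=
  {h | 1 ≤ h ∧ h + 1 ≤ lambdaNum G ∧ ∀ v, f v ≠ h}

/-- The hole index `ρ(G)`: minimum number of holes over all λ-labelings. -/
noncomputable def holeIndex (G : SimpleGraph V) : ℕ :=
  sInf {k | ∃ f : V → ℕ, IsLambdaLabeling G f ∧ (labHoles G f).ncard = k}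

open scoped Classical in
/-- The island sequence of a labeling: the multiset of cardinalities of the maximal
intervals `[a,b]` of consecutive integers all used by the labeling. -/
noncomputable def islandSeq [Fintype V] (G : SimpleGraph V) (f : V → ℕ) : Multiset ℕ :=
  (((Finset.range (lambdaNum G + 1)) ×ˢ (Finset.range (lambdaNum G + 1))).filter
    (fun q => q.1 ≤ q.2 ∧ (∀ x ∈ Finset.Icc q.1 q.2, ∃ v, f v = x) ∧
      (q.1 = 0 ∨ ∀ v, f v ≠ q.1 - 1) ∧ ∀ v, f v ≠ q.2 + 1)).val.map
    fun q => q.2 - q.1 + 1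

/-- `G` admits (at least) two distinct island sequences. -/
def MultipleIslandSequences [Fintype V] (G : SimpleGraph V) : Prop :=
  ∃ f g : V → ℕ, IsLambdaLabeling G f ∧ IsLambdaLabeling G g ∧
    (labHoles G f).ncard = holeIndex G ∧ (labHoles G g).ncard = holeIndex G ∧
    islandSeq G f ≠ islandSeq G g

/-- A vine: a maximal path one of whose endpoints (`a`) is a leaf and all of whose
vertices are light.  Maximality: any light vertex adjacent to the other end already
lies on the path. -/
def IsVine (G : SimpleGraph V) {a b : V} (p : G.Walk a b) : Prop :=
  p.IsPath ∧ ndeg G a = 1 ∧ (∀ v ∈ p.support, ndeg G v ≤ 2) ∧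
  ∀ c, G.Adj b c → ndeg G c ≤ 2 → c ∈ p.support

/-- A vine with center `v`: the (heavy) vertex adjacent to the non-leaf end of the vine. -/
def IsVineWithCenter (G : SimpleGraph V) {a b : V} (p : G.Walk a b) (v : V) : Prop :=
  IsVine G p ∧ G.Adj b v ∧ 2 < ndeg G v

/-- The matching number of the subgraph of `G` induced by `S`. -/
noncomputable def matchingNumberOn (G : SimpleGraph V) (S : Set V) : ℕ :=
  sSup {k | ∃ M : Set (Sym2 V), M ⊆ G.edgeSet ∧ (∀ e ∈ M, ∀ v ∈ e, v ∈ S) ∧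
    (∀ e ∈ M, ∀ f ∈ M, e ≠ f → ∀ v, v ∈ e → v ∉ f) ∧ M.ncard = k}

/-- Labels used in the family `F`: `A`, or `B k` where `k` records the number of
vertices of each vine of the labeled generalized star that produced the label. -/
inductive Lab | A | B (k : ℕ)

/-- A labeled generalized star with center `c` whose vines have `k` vertices each
(equivalently, every leaf is at distance `k` from `c`); the degenerate case
`deg c = 2` is the convention regarding a path of length `2k` as a labeled
generalized star with two vines.  The neighbors of the center are labeled `B k`,
the other non-leaf vertices (and the center) are labeled `A`, leaves are unlabeled. -/
def IsLGenStar {W : Type*} (H : SimpleGraph W) (c : W) (k : ℕ)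
    (lab : W → Option Lab) : Prop :=
  H.IsTree ∧ 2 ≤ ndeg H c ∧ (∀ v, v ≠ c → ndeg H v ≤ 2) ∧
  (∀ v, ndeg H v = 1 → H.dist c v = k) ∧
  lab c = some Lab.A ∧
  (∀ v, H.Adj c v → lab v = some (Lab.B k)) ∧
  (∀ v, v ≠ c → ¬H.Adj c v → ndeg H v = 1 → lab v = none) ∧
  (∀ v, v ≠ c → ¬H.Adj c v → 2 ≤ ndeg H v → lab v = some Lab.A)

/-- A labeled path: a path with at least three vertices, non-leaf vertices labeled `A`. -/
def IsLPath {W : Type*} (H : SimpleGraph W) (lab : W → Option Lab) : Prop :=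
  H.IsTree ∧ (∀ v, ndeg H v ≤ 2) ∧ 3 ≤ Nat.card W ∧
  (∀ v, ndeg H v = 1 → lab v = none) ∧
  ∀ v, 2 ≤ ndeg H v → lab v = some Lab.A

/-- The induced subgraph of `T` on `s` is a labeled generalized star. -/
def LGenStarOn (T : SimpleGraph V) (s : Set V) (c : V) (k : ℕ)
    (lab : V → Option Lab) : Prop :=
  ∃ hc : c ∈ s, IsLGenStar (T.induce s) ⟨c, hc⟩ k fun v => lab v.1

/-- The induced subgraph of `T` on `s` is a labeled path. -/
def LPathOn (T : SimpleGraph V) (s : Set V) (lab : V → Option Lab) : Prop :=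
  IsLPath (T.induce s) fun v => lab v.1

/-- The family `F` of labeled trees, realized as induced subgraphs (on vertex sets `s`)
of an ambient graph `T`:  start from a labeled generalized star with at least three
vines or from a labeled path, and repeatedly attach, via a single new edge, a labeled
generalized star with at least three vines at a vertex labeled `A` (Type-1), a labeled
path by one of its non-leaf vertices at a vertex labeled `A` (Type-2), or a labeled
generalized star whose vines have the same number of vertices `k` as those of the star
that labeled `u` with `B k`, at a vertex `u` labeled `B k` (Type-3). -/
inductive InF (T : SimpleGraph V) : Set V → (V → Option Lab) → Prop
  | base_star (s : Set V) (c : V) (k : ℕ) (lab : V → Option Lab) :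
      LGenStarOn T s c k lab → 3 ≤ {w ∈ s | T.Adj c w}.ncard → InF T s lab
  | base_path (s : Set V) (lab : V → Option Lab) :
      LPathOn T s lab → InF T s lab
  | type1 (s : Set V) (lab : V → Option Lab) (t : Set V) (lab' : V → Option Lab)
      (u c : V) (k : ℕ) :
      InF T s lab → Disjoint s t → u ∈ s → c ∈ t → lab u = some Lab.A →
      LGenStarOn T t c k lab' → 3 ≤ {w ∈ t | T.Adj c w}.ncard →
      (∀ x ∈ s, ∀ y ∈ t, (T.Adj x y ↔ x = u ∧ y = c)) →
      (∀ x ∈ s, lab' x = lab x) →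
      InF T (s ∪ t) lab'
  | type2 (s : Set V) (lab : V → Option Lab) (t : Set V) (lab' : V → Option Lab)
      (u v : V) :
      InF T s lab → Disjoint s t → u ∈ s → v ∈ t → lab u = some Lab.A →
      LPathOn T t lab' → 2 ≤ {w ∈ t | T.Adj v w}.ncard →
      (∀ x ∈ s, ∀ y ∈ t, (T.Adj x y ↔ x = u ∧ y = v)) →
      (∀ x ∈ s, lab' x = lab x) →
      InF T (s ∪ t) lab'
  | type3 (s : Set V) (lab : V → Option Lab) (t : Set V) (lab' : V → Option Lab)
      (u c : V) (k : ℕ) :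
      InF T s lab → Disjoint s t → u ∈ s → c ∈ t → lab u = some (Lab.B k) →
      LGenStarOn T t c k lab' →
      (∀ x ∈ s, ∀ y ∈ t, (T.Adj x y ↔ x = u ∧ y = c)) →
      (∀ x ∈ s, lab' x = lab x) →
      InF T (s ∪ t) lab'

/-- `G` is obtained from the tree `T` by expanding each edge of `T` into a complete
graph of arbitrary order: there is an embedding `ι` of the vertices of `T` and an
assignment `b` of a block of vertices of `G` to each edge of `T` such that an original
vertex lies in the block of an edge iff it is an endpoint of that edge, blocks of
distinct edges meet only in original vertices, every vertex of `G` lies in some block,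
and two distinct vertices of `G` are adjacent iff they lie in a common block. -/
def IsBlockExpansion {U W : Type*} (T : SimpleGraph U) (G : SimpleGraph W) : Prop :=
  ∃ (ι : U ↪ W) (b : Sym2 U → Set W),
    (∀ (u : U), ∀ e ∈ T.edgeSet, (ι u ∈ b e ↔ u ∈ e)) ∧
    (∀ e ∈ T.edgeSet, ∀ f ∈ T.edgeSet, e ≠ f → b e ∩ b f ⊆ Set.range ι) ∧
    (∀ w : W, ∃ e ∈ T.edgeSet, w ∈ b e) ∧
    (∀ x y : W, G.Adj x y ↔ x ≠ y ∧ ∃ e ∈ T.edgeSet, x ∈ b e ∧ y ∈ b e)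

lemma acyclic_mono {G H : SimpleGraph V} (hle : H ≤ G) (hG : G.IsAcyclic) : H.IsAcyclic :=
  fun _ c hc => hG (c.mapLe hle) (hc.mapLe hle)

lemma reach_split {H : SimpleGraph V} {x y a b : V}
    (h : H.Reachable a b) :
    (H.deleteEdges {s(x,y)}).Reachable a b ∨
    ((H.deleteEdges {s(x,y)}).Reachable a x ∧ (H.deleteEdges {s(x,y)}).Reachable y b) ∨
    ((H.deleteEdges {s(x,y)}).Reachable a y ∧ (H.deleteEdges {s(x,y)}).Reachable x b) := by
  obtain ⟨p⟩ := h
  induction p with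
  | nil => exact Or.inl (Reachable.refl _)
  | @cons u v w huv q ih =>
    by_cases hc : s(u,v) = s(x,y)
    · rw [Sym2.eq_iff] at hc
      rcases hc with ⟨rfl, rfl⟩ | ⟨rfl, rfl⟩
      · rcases ih with h1 | ⟨h1, h2⟩ | ⟨h1, h2⟩
        · exact Or.inr (Or.inl ⟨Reachable.refl _, h1⟩)
        · exact Or.inr (Or.inl ⟨Reachable.refl _, h2⟩)
        · exact Or.inl h2
      · rcases ih with h1 | ⟨h1, h2⟩ | ⟨h1, h2⟩
        · exact Or.inr (Or.inr ⟨Reachable.refl _, h1⟩)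
        · exact Or.inl h2
        · exact Or.inr (Or.inr ⟨Reachable.refl _, h2⟩)
    · have hadj : (H.deleteEdges {s(x,y)}).Adj u v := by
        rw [deleteEdges_adj]
        exact ⟨huv, by simpa using hc⟩
      rcases ih with h1 | ⟨h1, h2⟩ | ⟨h1, h2⟩
      · exact Or.inl (hadj.reachable.trans h1)
      · exact Or.inr (Or.inl ⟨hadj.reachable.trans h1, h2⟩)
      · exact Or.inr (Or.inr ⟨hadj.reachable.trans h1, h2⟩)

lemma card_cc_deleteEdge [Fintype V] {H : SimpleGraph V} (hac : H.IsAcyclic)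
    {x y : V} (hxy : H.Adj x y) :
    Nat.card (H.deleteEdges {s(x,y)}).ConnectedComponent
      = Nat.card H.ConnectedComponent + 1 := by
  classical
  set H' := H.deleteEdges {s(x,y)} with hH'
  have hbr : ¬ H'.Reachable x y := by
    have := (isAcyclic_iff_forall_adj_isBridge.mp hac) hxy
    rw [isBridge_iff] at this
    exact this
  have hle : H' ≤ H := by
    intro a b hab
    rw [hH', deleteEdges_adj] at hab
    exact hab.1
  letI : Fintype H.ConnectedComponent := Fintype.ofFinite _
  letI : Fintype H'.ConnectedComponent := Fintype.ofFinite _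
  set f : H'.ConnectedComponent → H.ConnectedComponent :=
    ConnectedComponent.map (Hom.ofLE hle) with hf
  have hfmk : ∀ a : V, f (H'.connectedComponentMk a) = H.connectedComponentMk a :=
    fun a => rfl
  have hfc_aux : ∀ a : V, f (H'.connectedComponentMk a) = H.connectedComponentMk a :=
    hfmk
  set C₀ := H.connectedComponentMk x with hC₀
  have reach_of_f : ∀ a : V, ∀ c : H.ConnectedComponent,
      f (H'.connectedComponentMk a) = c → ∀ b : V, c = H.connectedComponentMk b →
        H.Reachable a b := by
    intro a c h1 b h2
    rw [hfmk] at h1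
    exact ConnectedComponent.eq.mp (h1.trans h2)
  have fib1 : ∀ c : H.ConnectedComponent, c ≠ C₀ →
      (Finset.univ.filter (fun c' => f c' = c)).card = 1 := by
    intro c hc
    obtain ⟨v, rfl⟩ : ∃ v, H.connectedComponentMk v = c := c.exists_rep
    rw [Finset.card_eq_one]
    refine ⟨H'.connectedComponentMk v, ?_⟩
    ext c'
    obtain ⟨a, rfl⟩ : ∃ a, H'.connectedComponentMk a = c' := c'.exists_rep
    simp only [Finset.mem_filter, Finset.mem_univ, true_and, Finset.mem_singleton]
    constructor
    · intro hfc
      have hra : H.Reachable a v := reach_of_f a _ hfc v rfl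
      have hnax : ¬ H.Reachable a x := by
        intro hax
        exact hc (ConnectedComponent.eq.mpr (hra.symm.trans hax))
      rcases reach_split (x := x) (y := y) hra with h1 | ⟨h1, h2⟩ | ⟨h1, h2⟩
      · exact ConnectedComponent.eq.mpr h1
      · exact absurd (h1.mono hle) hnax
      · exact absurd ((h1.mono hle).trans hxy.symm.reachable) hnax
    · intro h
      have h' : H'.connectedComponentMk a = H'.connectedComponentMk v := h
      have hr : H.Reachable a v := (ConnectedComponent.eq.mp h').mono hle
      exact (hfmk a).trans (ConnectedComponent.eq.mpr hr)
  have hxyne : (H'.connectedComponentMk x) ≠ H'.connectedComponentMk y := by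
    intro h
    exact hbr (ConnectedComponent.eq.mp h)
  have fib2 : (Finset.univ.filter (fun c' => f c' = C₀)).card = 2 := by
    have hset : (Finset.univ.filter (fun c' => f c' = C₀)) =
        {H'.connectedComponentMk x, H'.connectedComponentMk y} := by
      ext c'
      obtain ⟨a, rfl⟩ : ∃ a, H'.connectedComponentMk a = c' := c'.exists_rep
      simp only [Finset.mem_filter, Finset.mem_univ, true_and, Finset.mem_insert,
        Finset.mem_singleton]
      constructor
      · intro hfc
        have hra : H.Reachable a x := reach_of_f a _ hfc x rfl
        rcases reach_split (x := x) (y := y) hra with h1 | ⟨h1, h2⟩ | ⟨h1, h2⟩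
        · exact Or.inl (ConnectedComponent.eq.mpr h1)
        · exact absurd h2.symm hbr
        · exact Or.inr (ConnectedComponent.eq.mpr h1)
      · intro h
        rcases h with h | h
        · have h' : H'.connectedComponentMk a = H'.connectedComponentMk x := h
          have hr : H.Reachable a x := (ConnectedComponent.eq.mp h').mono hle
          exact (hfmk a).trans (ConnectedComponent.eq.mpr hr)
        · have h' : H'.connectedComponentMk a = H'.connectedComponentMk y := h
          have hr : H.Reachable a x :=
            ((ConnectedComponent.eq.mp h').mono hle).trans hxy.symm.reachable
          exact (hfmk a).trans (ConnectedComponent.eq.mpr hr)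
    rw [hset]
    rw [Finset.card_insert_of_notMem (by simpa using hxyne), Finset.card_singleton]
  have hcard : Fintype.card H'.ConnectedComponent =
      ∑ c : H.ConnectedComponent, (Finset.univ.filter (fun c' => f c' = c)).card := by
    rw [← Finset.card_univ]
    exact Finset.card_eq_sum_card_fiberwise (fun c' _ => Finset.mem_univ (f c'))
  have hsum : ∑ c : H.ConnectedComponent, (Finset.univ.filter (fun c' => f c' = c)).card
      = (Finset.univ.erase C₀).card + 2 := by
    rw [← Finset.sum_erase_add _ _ (Finset.mem_univ C₀), fib2]
    congr 1
    rw [Finset.card_eq_sum_ones]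
    exact Finset.sum_congr rfl (fun c hc => fib1 c (Finset.ne_of_mem_erase hc))
  have hpos : 0 < Fintype.card H.ConnectedComponent := Fintype.card_pos_iff.mpr ⟨C₀⟩
  have herase : (Finset.univ.erase C₀).card = Fintype.card H.ConnectedComponent - 1 := by
    rw [Finset.card_erase_of_mem (Finset.mem_univ C₀), Finset.card_univ]
  rw [Nat.card_eq_fintype_card, Nat.card_eq_fintype_card, hcard, hsum, herase]
  omega


lemma acyclic_card_cc [Fintype V] (H : SimpleGraph V) (hac : H.IsAcyclic) :
    Nat.card H.ConnectedComponent + H.edgeSet.ncard = Fintype.card V := by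
  classical
  generalize hn : H.edgeSet.ncard = n
  induction n generalizing H with
  | zero =>
    have hfin : H.edgeSet.Finite := Set.toFinite _
    have hbot : H = ⊥ := by
      rw [← edgeSet_eq_empty]
      exact (Set.ncard_eq_zero hfin).mp hn
    subst hbot
    rw [Nat.add_zero]
    have hbij : Function.Bijective ((⊥ : SimpleGraph V).connectedComponentMk) := by
      constructor
      · intro a b hab
        exact reachable_bot.mp (ConnectedComponent.eq.mp hab)
      · intro c
        obtain ⟨a, rfl⟩ := Quot.exists_rep c
        exact ⟨a, rfl⟩
    rw [← Nat.card_eq_fintype_card]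
    exact (Nat.card_eq_of_bijective _ hbij).symm
  | succ n ih =>
    have hne : H.edgeSet.Nonempty := by
      rw [Set.nonempty_iff_ne_empty]
      intro h
      rw [h] at hn
      simp at hn
    obtain ⟨e, he⟩ := hne
    induction e using Sym2.ind with
    | _ x y =>
    have hxy : H.Adj x y := he
    set H' := H.deleteEdges {s(x,y)} with hH'
    have hle : H' ≤ H := by
      intro a b hab
      rw [hH', deleteEdges_adj] at hab
      exact hab.1
    have hac' : H'.IsAcyclic := acyclic_mono hle hac
    have hes : H'.edgeSet = H.edgeSet \ {s(x,y)} := edgeSet_deleteEdges _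
    have hcard' : H'.edgeSet.ncard = n := by
      rw [hes, Set.ncard_diff_singleton_of_mem he, hn]
      omega
    have := ih H' hac' hcard'
    have hcc := card_cc_deleteEdge hac hxy
    rw [← hH'] at hcc
    omega

lemma matching_aux [Fintype V] (F : SimpleGraph V) (A : Finset V)
    (hA : ∀ a ∈ A, ∃ b, F.Adj a b) :
    ∃ M : Finset (Sym2 V), (↑M : Set (Sym2 V)) ⊆ F.edgeSet ∧
      (∀ e ∈ M, ∀ v ∈ e, v ∈ A) ∧
      (∀ e ∈ M, ∀ f ∈ M, e ≠ f → ∀ v, v ∈ e → v ∉ f) ∧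
      A.card ≤ F.edgeSet.ncard + M.card := by
  classical
  generalize hn : F.edgeSet.ncard = n
  induction n generalizing F A with
  | zero =>
    refine ⟨∅, by simp, by simp, by simp, ?_⟩
    have hAe : A = ∅ := by
      rw [Finset.eq_empty_iff_forall_notMem]
      intro a ha
      obtain ⟨b, hb⟩ := hA a ha
      have : s(a,b) ∈ F.edgeSet := hb
      have : F.edgeSet.Nonempty := ⟨_, this⟩
      rw [← Set.ncard_pos (Set.toFinite _)] at this
      omega
    simp [hAe]
  | succ n ih =>
    have hne : F.edgeSet.Nonempty := by
      rw [Set.nonempty_iff_ne_empty]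
      intro h
      rw [h] at hn
      simp at hn
    obtain ⟨e, he⟩ := hne
    induction e using Sym2.ind with
    | _ x y =>
    have hxy : F.Adj x y := he
    set F' := F.deleteEdges {s(x,y)} with hF'
    have hle : F' ≤ F := by
      intro a b hab
      rw [hF', deleteEdges_adj] at hab
      exact hab.1
    have hes : F'.edgeSet = F.edgeSet \ {s(x,y)} := edgeSet_deleteEdges _
    have hcard' : F'.edgeSet.ncard = n := by
      rw [hes, Set.ncard_diff_singleton_of_mem he, hn]
      omega
    set A' := A.filter (fun a => ∃ b, F'.Adj a b) with hA'
    have hA'sub : A' ⊆ A := Finset.filter_subset _ _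
    obtain ⟨M'', hM1, hM2, hM3, hM4⟩ := ih F' A'
      (fun a ha => (Finset.mem_filter.mp ha).2) hcard'
    have hM1' : (↑M'' : Set (Sym2 V)) ⊆ F.edgeSet := fun e hee => by
      have := hM1 hee
      rw [hes] at this
      exact this.1
    have hAsub : ∀ a ∈ A, a ∉ A' → a = x ∨ a = y := by
      intro a ha ha'
      obtain ⟨b, hb⟩ := hA a ha
      rw [hA', Finset.mem_filter] at ha'
      push_neg at ha'
      have hnadj : ¬ F'.Adj a b := ha' ha b
      rw [hF', deleteEdges_adj] at hnadj
      push_neg at hnadj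
      have heq : s(a,b) = s(x,y) := by simpa using hnadj hb
      have : a ∈ s(x,y) := heq ▸ Sym2.mem_mk_left a b
      simpa [Sym2.mem_iff] using this
    by_cases hcase : x ∈ A ∧ x ∉ A' ∧ y ∈ A ∧ y ∉ A'
    · obtain ⟨hxA, hxA', hyA, hyA'⟩ := hcase
      have henotM : s(x,y) ∉ M'' := by
        intro hmem
        exact hxA' (hM2 _ hmem x (Sym2.mem_mk_left x y))
      refine ⟨insert s(x,y) M'', ?_, ?_, ?_, ?_⟩
      · intro e hee
        simp only [Finset.coe_insert, Set.mem_insert_iff] at hee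
        rcases hee with rfl | hee
        · exact he
        · exact hM1' hee
      · intro e hee v hv
        rcases Finset.mem_insert.mp hee with rfl | hee
        · rcases Sym2.mem_iff.mp hv with rfl | rfl
          · exact hxA
          · exact hyA
        · exact hA'sub (hM2 e hee v hv)
      · intro e hee f hf hef v hv
        rcases Finset.mem_insert.mp hee with rfl | hee
        · rcases Finset.mem_insert.mp hf with rfl | hf
          · exact absurd rfl hef
          · intro hvf
            have : v ∈ A' := hM2 _ hf v hvf
            rcases Sym2.mem_iff.mp hv with rfl | rfl
            · exact hxA' this
            · exact hyA' this
        · rcases Finset.mem_insert.mp hf with rfl | hf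
          · intro hvf
            have : v ∈ A' := hM2 _ hee v hv
            rcases Sym2.mem_iff.mp hvf with h | h
            · subst h; exact hxA' this
            · subst h; exact hyA' this
          · exact hM3 e hee f hf hef v hv
      · have hcardA : A.card ≤ A'.card + 2 := by
          have : A ⊆ insert x (insert y A') := by
            intro a ha
            by_cases h : a ∈ A'
            · exact Finset.mem_insert_of_mem (Finset.mem_insert_of_mem h)
            · rcases hAsub a ha h with rfl | rfl
              · exact Finset.mem_insert_self _ _
              · exact Finset.mem_insert_of_mem (Finset.mem_insert_self _ _)
          calc A.card ≤ (insert x (insert y A')).card := Finset.card_le_card this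
            _ ≤ (insert y A').card + 1 := Finset.card_insert_le _ _
            _ ≤ A'.card + 1 + 1 := by
                have := Finset.card_insert_le y A'
                omega
        rw [Finset.card_insert_of_notMem henotM]
        omega
    · refine ⟨M'', hM1', fun e hee v hv => hA'sub (hM2 e hee v hv), hM3, ?_⟩
      have hcardA : A.card ≤ A'.card + 1 := by
        have hxory : (∀ a ∈ A, a ∉ A' → a = y) ∨ (∀ a ∈ A, a ∉ A' → a = x) := by
          by_cases hx : x ∈ A ∧ x ∉ A'
          · right
            intro a ha ha'
            rcases hAsub a ha ha' with rfl | rfl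
            · rfl
            · exfalso; exact hcase ⟨hx.1, hx.2, ha, ha'⟩
          · left
            intro a ha ha'
            rcases hAsub a ha ha' with rfl | rfl
            · exact absurd ⟨ha, ha'⟩ hx
            · rfl
        rcases hxory with h | h
        · have : A ⊆ insert y A' := by
            intro a ha
            by_cases hh : a ∈ A'
            · exact Finset.mem_insert_of_mem hh
            · rw [h a ha hh]; exact Finset.mem_insert_self _ _
          have h2 := Finset.card_insert_le y A'
          have := Finset.card_le_card this
          omega
        · have : A ⊆ insert x A' := by
            intro a ha
            by_cases hh : a ∈ A'
            · exact Finset.mem_insert_of_mem hh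
            · rw [h a ha hh]; exact Finset.mem_insert_self _ _
          have h2 := Finset.card_insert_le x A'
          have := Finset.card_le_card this
          omega
      omega


lemma ndeg_eq [Fintype V] (G : SimpleGraph V) [DecidableRel G.Adj] (v : V) :
    ndeg G v = G.degree v := by
  rw [ndeg, degree, neighborFinset_def, Set.ncard_eq_toFinset_card']

lemma degree_pos [Fintype V] {T : SimpleGraph V} [DecidableRel T.Adj]
    (hconn : T.Connected) (h2 : 2 ≤ Fintype.card V) (v : V) : 0 < T.degree v := by
  have : Nontrivial V := Fintype.one_lt_card_iff_nontrivial.mp h2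
  obtain ⟨w, hw⟩ := exists_ne v
  obtain ⟨p⟩ := hconn.preconnected v w
  cases p with
  | nil => exact absurd rfl hw.symm
  | cons h q => exact (T.degree_pos_iff_exists_adj v).mpr ⟨_, h⟩

lemma sumdeg [Fintype V] (T : SimpleGraph V) [DecidableRel T.Adj]
    (hT : T.IsTree) (h2 : 2 ≤ Fintype.card V) :
    (∑ v ∈ Finset.univ.filter (fun v => 2 < T.degree v), T.degree v) + 2
      = 2 * (Finset.univ.filter (fun v => 2 < T.degree v)).card
        + (Finset.univ.filter (fun v => T.degree v = 1)).card := by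
  classical
  have hpos : ∀ v, 0 < T.degree v := degree_pos hT.isConnected h2
  have hsum : ∑ v, T.degree v = 2 * T.edgeFinset.card := T.sum_degrees_eq_twice_card_edges
  have hTE : T.edgeFinset.card + 1 = Fintype.card V := hT.card_edgeFinset
  have hsplit : ∑ v ∈ Finset.univ.filter (fun v => 2 < T.degree v), T.degree v
      + ∑ v ∈ Finset.univ.filter (fun v => ¬ 2 < T.degree v), T.degree v
      = ∑ v, T.degree v := Finset.sum_filter_add_sum_filter_not _ _ _
  have hlight : ∑ v ∈ Finset.univ.filter (fun v => ¬ 2 < T.degree v), T.degree v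
      + (Finset.univ.filter (fun v => T.degree v = 1)).card
      = 2 * (Finset.univ.filter (fun v => ¬ 2 < T.degree v)).card := by
    have h1 : (Finset.univ.filter (fun v => T.degree v = 1))
        = (Finset.univ.filter (fun v => ¬ 2 < T.degree v)).filter
            (fun v => T.degree v = 1) := by
      rw [Finset.filter_filter]
      apply Finset.filter_congr
      intro v _
      constructor
      · intro h; omega
      · intro h; exact h.2
    rw [h1, Finset.card_filter, ← Finset.sum_add_distrib]
    rw [Finset.card_eq_sum_ones, Finset.mul_sum]
    apply Finset.sum_congr rfl
    intro v hv
    simp only [Finset.mem_filter] at hv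
    have := hpos v
    by_cases hd : T.degree v = 1 <;> simp [hd] <;> omega
  have hcards : (Finset.univ.filter (fun v => 2 < T.degree v)).card
      + (Finset.univ.filter (fun v => ¬ 2 < T.degree v)).card = Fintype.card V := by
    rw [Finset.card_filter_add_card_filter_not, Finset.card_univ]
  omega


lemma card_edge_partition [Fintype V] (G : SimpleGraph V) [DecidableRel G.Adj]
    (p : V → Prop)
    [DecidablePred (fun e : Sym2 V => ∀ v ∈ e, p v)]
    [DecidablePred (fun e : Sym2 V => (∃ v ∈ e, p v) ∧ (∃ v ∈ e, ¬ p v))]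
    [DecidablePred (fun e : Sym2 V => ∀ v ∈ e, ¬ p v)] :
    G.edgeFinset.card = (G.edgeFinset.filter (fun e => ∀ v ∈ e, p v)).card
      + (G.edgeFinset.filter (fun e => (∃ v ∈ e, p v) ∧ (∃ v ∈ e, ¬ p v))).card
      + (G.edgeFinset.filter (fun e => ∀ v ∈ e, ¬ p v)).card := by
  rw [Finset.card_filter, Finset.card_filter, Finset.card_filter,
    ← Finset.sum_add_distrib, ← Finset.sum_add_distrib, Finset.card_eq_sum_ones]
  apply Finset.sum_congr rfl
  intro e _
  induction e using Sym2.ind with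
  | _ a b =>
    by_cases ha : p a <;> by_cases hb : p b <;>
      simp [Sym2.mem_iff, ha, hb]

lemma card_biUnion_pt [Fintype V] [DecidableEq V] (Hvy : Finset V) (K : V → Finset V)
    (hdisj : ∀ v ∈ Hvy, ∀ w ∈ K v, w ∉ Hvy) :
    (Hvy.biUnion (fun v => (K v).image (fun w => s(v,w)))).card
      = ∑ v ∈ Hvy, (K v).card := by
  rw [Finset.card_biUnion]
  · apply Finset.sum_congr rfl
    intro v _
    apply Finset.card_image_of_injOn
    intro w _ w' _ hww
    rw [Sym2.eq_iff] at hww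
    rcases hww with ⟨_, h⟩ | ⟨h1, h2⟩
    · exact h
    · rw [← h1, ← h2]
  · intro v hv v' hv' hne
    rw [Function.onFun, Finset.disjoint_left]
    intro e hev hev'
    simp only [Finset.mem_image] at hev hev'
    obtain ⟨w, hw, rfl⟩ := hev
    obtain ⟨w', hw', heq⟩ := hev'
    rw [Sym2.eq_iff] at heq
    rcases heq with ⟨h1, h2⟩ | ⟨h1, h2⟩
    · exact hne (h1.symm)
    · exact hdisj v hv w hw (by rwa [← h1])


section Main
variable [Fintype V] (T : SimpleGraph V) [DecidableRel T.Adj]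

lemma numLeaves_eq : numLeaves T = (Finset.univ.filter (fun v => T.degree v = 1)).card := by
  classical
  rw [numLeaves]
  have : {v | ndeg T v = 1} = ↑(Finset.univ.filter (fun v => T.degree v = 1)) := by
    ext v
    simp [ndeg_eq]
  rw [this, Set.ncard_coe_finset]

lemma numHeavyEdges_eq [DecidablePred (fun e : Sym2 V => ∀ v ∈ e, ¬ T.degree v ≤ 2)] :
    numHeavyEdges T
    = (T.edgeFinset.filter (fun e => ∀ v ∈ e, ¬ T.degree v ≤ 2)).card := by
  rw [numHeavyEdges]
  have : {e ∈ T.edgeSet | ∀ v ∈ e, 2 < ndeg T v}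
      = ↑(T.edgeFinset.filter (fun e => ∀ v ∈ e, ¬ T.degree v ≤ 2)) := by
    ext e
    simp only [Set.mem_setOf_eq, Finset.coe_filter, mem_edgeFinset]
    constructor
    · rintro ⟨h1, h2⟩
      exact ⟨h1, fun v hv => by have := h2 v hv; rw [ndeg_eq] at this; omega⟩
    · rintro ⟨h1, h2⟩
      exact ⟨h1, fun v hv => by have := h2 v hv; rw [ndeg_eq]; omega⟩
  rw [this, Set.ncard_coe_finset]

lemma matchingNumberOn_bddAbove (S : Set V) : BddAbove {k | ∃ M : Set (Sym2 V),
    M ⊆ T.edgeSet ∧ (∀ e ∈ M, ∀ v ∈ e, v ∈ S) ∧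
    (∀ e ∈ M, ∀ f ∈ M, e ≠ f → ∀ v, v ∈ e → v ∉ f) ∧ M.ncard = k} := by
  refine ⟨T.edgeSet.ncard, ?_⟩
  rintro k ⟨M, hM1, _, _, rfl⟩
  exact Set.ncard_le_ncard hM1 (Set.toFinite _)

lemma S_eq_coe (S : Set V)
    (hS : S = {v | 2 < ndeg T v ∧ {w | T.Adj v w ∧ ndeg T w ≤ 2}.ncard = 1}) :
    S = ↑((Finset.univ.filter (fun v => 2 < T.degree v)).filter
      (fun v => ((T.neighborFinset v).filter (fun w => T.degree w ≤ 2)).card = 1)) := by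
  classical
  rw [hS]
  ext v
  have hset : {w | T.Adj v w ∧ ndeg T w ≤ 2}
      = ↑((T.neighborFinset v).filter (fun w => T.degree w ≤ 2)) := by
    ext w
    simp [ndeg_eq, mem_neighborFinset]
  simp only [Set.mem_setOf_eq, Finset.coe_filter, Finset.mem_filter, Finset.mem_univ, true_and,
    Set.mem_setOf_eq]
  rw [hset, Set.ncard_coe_finset, ndeg_eq]

lemma LB (H : SimpleGraph V) (hT : T.IsTree) (h2 : 2 ≤ Fintype.card V)
    (S : Set V)
    (hS : S = {v | 2 < ndeg T v ∧ {w | T.Adj v w ∧ ndeg T w ≤ 2}.ncard = 1})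
    (hHT : H ≤ T) (hlf : IsLinearForest H) :
    numLeaves T + S.ncard ≤ numPaths H + numHeavyEdges T + matchingNumberOn T S + 1 := by
  classical
  letI : DecidableRel H.Adj := Classical.decRel _
  set Hvy := Finset.univ.filter (fun v => 2 < T.degree v) with hHvy
  set lightNbr := fun v => (T.neighborFinset v).filter (fun w => T.degree w ≤ 2) with hlightNbr
  set Sf := Hvy.filter (fun v => (lightNbr v).card = 1) with hSfdef
  have hScoe : S = ↑Sf := S_eq_coe T S hS
  have hscard : S.ncard = Sf.card := by rw [hScoe, Set.ncard_coe_finset]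
  set Q : Sym2 V → Prop := fun e => ∀ v ∈ e, ¬ T.degree v ≤ 2 with hQ
  have hhe : numHeavyEdges T = (T.edgeFinset.filter Q).card := numHeavyEdges_eq T
  have hl : numLeaves T = (Finset.univ.filter (fun v => T.degree v = 1)).card :=
    numLeaves_eq T
  have hEsub : H.edgeFinset ⊆ T.edgeFinset := edgeFinset_mono hHT
  set R := T.edgeFinset \ H.edgeFinset with hR
  have hrcard : R.card + H.edgeFinset.card = T.edgeFinset.card :=
    Finset.card_sdiff_add_card_eq_card hEsub
  have hTE : T.edgeFinset.card + 1 = Fintype.card V := hT.card_edgeFinset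
  have hnumP : numPaths H + H.edgeFinset.card = Fintype.card V := by
    have := acyclic_card_cc H hlf.1
    rwa [show H.edgeSet.ncard = H.edgeFinset.card by
      rw [← Set.ncard_coe_finset H.edgeFinset, coe_edgeFinset]] at this
  have hdegH2 : ∀ v, H.degree v ≤ 2 := fun v => by rw [← ndeg_eq]; exact hlf.2 v
  have hnbrsub : ∀ v, H.neighborFinset v ⊆ T.neighborFinset v := by
    intro v w hw
    rw [mem_neighborFinset] at hw ⊢
    exact hHT hw
  -- removed edges incident to v
  have hcnt : ∀ v, (R.filter (fun e => v ∈ e)).card + H.degree v = T.degree v := by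
    intro v
    have himg : (T.neighborFinset v \ H.neighborFinset v).image (fun w => s(v,w))
        = R.filter (fun e => v ∈ e) := by
      ext e
      simp only [Finset.mem_image, Finset.mem_sdiff, mem_neighborFinset, Finset.mem_filter,
        hR, mem_edgeFinset, mem_edgeSet]
      constructor
      · rintro ⟨w, ⟨hTw, hHw⟩, rfl⟩
        exact ⟨⟨hTw, fun hc => hHw hc⟩, Sym2.mem_mk_left v w⟩
      · rintro ⟨⟨hTe, hHe⟩, hv⟩
        obtain ⟨w, rfl⟩ := Sym2.mem_iff_exists.mp hv
        exact ⟨w, ⟨hTe, fun h => hHe h⟩, rfl⟩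
    have hinj : Set.InjOn (fun w => s(v,w)) ↑(T.neighborFinset v \ H.neighborFinset v) := by
      intro w _ w' _ hww
      simp only [Sym2.eq_iff] at hww
      rcases hww with ⟨_, h⟩ | ⟨h1, h2⟩
      · exact h
      · rw [← h1, ← h2]
    rw [← himg, Finset.card_image_of_injOn hinj]
    exact Finset.card_sdiff_add_card_eq_card (hnbrsub v)
  have hdouble : ∑ v ∈ Hvy, (R.filter (fun e => v ∈ e)).card
      = ∑ e ∈ R, (Hvy.filter (fun v => v ∈ e)).card := by
    simp_rw [Finset.card_filter]
    rw [Finset.sum_comm]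
  have hedge : ∀ e ∈ R, (Hvy.filter (fun v => v ∈ e)).card
      ≤ 1 + (if Q e then 1 else 0) := by
    intro e heR
    have heT : e ∈ T.edgeFinset := (Finset.mem_sdiff.mp heR).1
    induction e using Sym2.ind with
    | _ a b =>
    by_cases hq : Q s(a,b)
    · have hsub : Hvy.filter (fun v => v ∈ s(a,b)) ⊆ {a, b} := by
        intro v hv
        simp only [Finset.mem_filter, Sym2.mem_iff] at hv
        simpa using hv.2
      have := Finset.card_le_card hsub
      have h2ab := Finset.card_insert_le a ({b} : Finset V)
      rw [if_pos hq]
      simp only [Finset.card_singleton] at h2ab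
      omega
    · obtain ⟨u, hu, hulight⟩ : ∃ u ∈ s(a,b), T.degree u ≤ 2 := by
        by_contra hc
        push_neg at hc
        exact hq (fun v hv => by have := hc v hv; omega)
      have hsub : Hvy.filter (fun v => v ∈ s(a,b)) ⊆ ({a, b} : Finset V) \ {u} := by
        intro v hv
        simp only [Finset.mem_filter, hHvy, Finset.mem_univ, true_and, Sym2.mem_iff] at hv
        simp only [Finset.mem_sdiff, Finset.mem_insert, Finset.mem_singleton]
        refine ⟨by simpa using hv.2, ?_⟩
        intro hvu
        subst hvu
        omega
      have h1 := Finset.card_le_card hsub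
      have h2' : (({a, b} : Finset V) \ {u}).card ≤ 1 := by
        have hmem : u ∈ ({a, b} : Finset V) := by simpa using hu
        have := Finset.card_sdiff_add_card_eq_card (Finset.singleton_subset_iff.mpr hmem)
        have h3 := Finset.card_insert_le a ({b} : Finset V)
        simp only [Finset.card_singleton] at this h3
        omega
      rw [if_neg hq]
      omega
  have hsumedge : ∑ e ∈ R, (Hvy.filter (fun v => v ∈ e)).card
      ≤ R.card + (R.filter Q).card := by
    calc ∑ e ∈ R, (Hvy.filter (fun v => v ∈ e)).card
        ≤ ∑ e ∈ R, (1 + if Q e then 1 else 0) := Finset.sum_le_sum hedge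
      _ = R.card + (R.filter Q).card := by
          rw [Finset.sum_add_distrib, Finset.card_eq_sum_ones R, Finset.card_filter]
  have hQsplit : (R.filter Q).card + (H.edgeFinset.filter Q).card
      = (T.edgeFinset.filter Q).card := by
    have hunion : R ∪ H.edgeFinset = T.edgeFinset := Finset.sdiff_union_of_subset hEsub
    rw [← hunion, Finset.filter_union, Finset.card_union_of_disjoint]
    exact Finset.disjoint_filter_filter (Finset.sdiff_disjoint)
  -- the kept-heavy-edges graph
  set F : SimpleGraph V := {
    Adj := fun a b => H.Adj a b ∧ 2 < T.degree a ∧ 2 < T.degree b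
    symm := ⟨by intro a b ⟨h1, h2, h3⟩; exact ⟨h1.symm, h3, h2⟩⟩
    loopless := ⟨fun a ⟨h1, _, _⟩ => H.irrefl h1⟩ } with hF
  have hFedge : F.edgeSet = ↑(H.edgeFinset.filter Q) := by
    ext e
    induction e using Sym2.ind with
    | _ a b =>
    simp only [mem_edgeSet, hF, Finset.coe_filter, Set.mem_setOf_eq, mem_edgeFinset,
      mem_edgeSet, hQ, Sym2.mem_iff]
    constructor
    · rintro ⟨h1, h2, h3⟩
      refine ⟨h1, ?_⟩
      intro v hv
      rcases hv with rfl | rfl <;> omega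
    · rintro ⟨h1, h2⟩
      have ha := h2 a (Or.inl rfl)
      have hb := h2 b (Or.inr rfl)
      exact ⟨h1, by omega, by omega⟩
  have hFncard : F.edgeSet.ncard = (H.edgeFinset.filter Q).card := by
    rw [hFedge, Set.ncard_coe_finset]
  set S₀ := Sf.filter (fun v => ∃ w, F.Adj v w) with hS₀
  obtain ⟨M', hM'1, hM'2, hM'3, hM'4⟩ := matching_aux F S₀
    (fun a ha => (Finset.mem_filter.mp ha).2)
  have hM't : M'.card ≤ matchingNumberOn T S := by
    apply le_csSup (matchingNumberOn_bddAbove T S)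
    refine ⟨↑M', ?_, ?_, ?_, Set.ncard_coe_finset M'⟩
    · intro e he
      have := hM'1 he
      rw [hFedge] at this
      simp only [Finset.coe_filter, Set.mem_setOf_eq, mem_edgeFinset] at this
      exact edgeSet_mono hHT this.1
    · intro e he v hv
      have hvS₀ : v ∈ S₀ := hM'2 e he v hv
      rw [hScoe]
      exact_mod_cast Finset.mem_of_mem_filter v hvS₀
    · intro e he f hf hef v hv
      exact hM'3 e he f hf hef v hv
  have hSbound : ∀ v ∈ Hvy, H.degree v + (if v ∈ Sf \ S₀ then 1 else 0) ≤ 2 := by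
    intro v hv
    by_cases hvs : v ∈ Sf \ S₀
    · simp only [if_pos hvs]
      rw [Finset.mem_sdiff] at hvs
      obtain ⟨hvSf, hvS₀⟩ := hvs
      have hnoF : ∀ w, ¬ F.Adj v w := by
        intro w hw
        exact hvS₀ (Finset.mem_filter.mpr ⟨hvSf, ⟨w, hw⟩⟩)
      have hsub : H.neighborFinset v ⊆ lightNbr v := by
        intro w hw
        rw [mem_neighborFinset] at hw
        have hvheavy : 2 < T.degree v := by
          have := Finset.mem_filter.mp (Finset.mem_of_mem_filter v hvSf)
          simpa [hHvy] using Finset.mem_of_mem_filter v hvSf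
        by_cases hwl : T.degree w ≤ 2
        · rw [hlightNbr]
          simp only [Finset.mem_filter, mem_neighborFinset]
          exact ⟨hHT hw, hwl⟩
        · exact absurd ⟨hw, hvheavy, by omega⟩ (hnoF w)
      have h1 := Finset.card_le_card hsub
      have hSfcard : (lightNbr v).card = 1 := (Finset.mem_filter.mp hvSf).2
      rw [degree]
      omega
    · simp only [if_neg hvs, add_zero]
      exact hdegH2 v
  have hsumH : ∑ v ∈ Hvy, H.degree v + (Sf \ S₀).card ≤ 2 * Hvy.card := by
    have hsd : Sf \ S₀ ⊆ Hvy := fun v hv =>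
      Finset.mem_of_mem_filter v (Finset.mem_sdiff.mp hv).1
    calc ∑ v ∈ Hvy, H.degree v + (Sf \ S₀).card
        = ∑ v ∈ Hvy, (H.degree v + if v ∈ Sf \ S₀ then 1 else 0) := by
          rw [Finset.sum_add_distrib]
          congr 1
          have heq2 : ∑ v ∈ Hvy, (if v ∈ Sf \ S₀ then 1 else 0)
              = (Hvy.filter (fun v => v ∈ Sf \ S₀)).card := (Finset.card_filter _ _).symm
          rw [heq2, Finset.filter_mem_eq_inter, Finset.inter_eq_right.mpr hsd]
      _ ≤ ∑ v ∈ Hvy, 2 := Finset.sum_le_sum hSbound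
      _ = 2 * Hvy.card := by rw [Finset.sum_const, smul_eq_mul, Nat.mul_comm]
  have hS₀sub : S₀ ⊆ Sf := Finset.filter_subset _ _
  have hsd2 : (Sf \ S₀).card + S₀.card = Sf.card := Finset.card_sdiff_add_card_eq_card hS₀sub
  have hsumdeg := sumdeg T hT h2
  rw [← hHvy] at hsumdeg
  have hsumsplit : ∑ v ∈ Hvy, (R.filter (fun e => v ∈ e)).card + ∑ v ∈ Hvy, H.degree v
      = ∑ v ∈ Hvy, T.degree v := by
    rw [← Finset.sum_add_distrib]
    exact Finset.sum_congr rfl (fun v _ => hcnt v)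
  rw [hl, hscard, hhe]
  omega


lemma UB (hT : T.IsTree) (h2 : 2 ≤ Fintype.card V)
    (hh : ∀ v, 2 < T.degree v → ∃ w, T.Adj v w ∧ T.degree w ≤ 2)
    (S : Set V)
    (hS : S = {v | 2 < ndeg T v ∧ {w | T.Adj v w ∧ ndeg T w ≤ 2}.ncard = 1}) :
    ∃ H, H ≤ T ∧ IsLinearForest H ∧
      numPaths H + numHeavyEdges T + matchingNumberOn T S + 1
        = numLeaves T + S.ncard := by
  classical
  set Hvy := Finset.univ.filter (fun v => 2 < T.degree v) with hHvy
  set lightNbr := fun v => (T.neighborFinset v).filter (fun w => T.degree w ≤ 2) with hlightNbr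
  set Sf := Hvy.filter (fun v => (lightNbr v).card = 1) with hSfdef
  have hScoe : S = ↑Sf := S_eq_coe T S hS
  have hscard : S.ncard = Sf.card := by rw [hScoe, Set.ncard_coe_finset]
  have hSmem : ∀ v, v ∈ S ↔ v ∈ Sf := by
    intro v; rw [hScoe]; simp
  set Q : Sym2 V → Prop := fun e => ∀ v ∈ e, ¬ T.degree v ≤ 2 with hQ
  have hhe : numHeavyEdges T = (T.edgeFinset.filter Q).card := numHeavyEdges_eq T
  have hl : numLeaves T = (Finset.univ.filter (fun v => T.degree v = 1)).card :=
    numLeaves_eq T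
  have hlightNbrAdj : ∀ v w, w ∈ lightNbr v → T.Adj v w ∧ T.degree w ≤ 2 := by
    intro v w hw
    rw [hlightNbr] at hw
    simp only [Finset.mem_filter, mem_neighborFinset] at hw
    exact hw
  -- choice of kept light neighbours
  have hKex : ∀ v, ∃ Kv : Finset V, Kv ⊆ lightNbr v ∧
      ((2 < T.degree v ∧ (lightNbr v).card = 1) → Kv = lightNbr v) ∧
      ((2 < T.degree v ∧ (lightNbr v).card ≠ 1) → Kv.card = 2) := by
    intro v
    by_cases hv : 2 < T.degree v
    · by_cases hvS : (lightNbr v).card = 1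
      · exact ⟨lightNbr v, subset_rfl, fun _ => rfl, fun hc => absurd hvS hc.2⟩
      · have h1 : 1 ≤ (lightNbr v).card := by
          obtain ⟨w, hw1, hw2⟩ := hh v hv
          have hwmem : w ∈ lightNbr v := by
            rw [hlightNbr]
            simp only [Finset.mem_filter, mem_neighborFinset]
            exact ⟨hw1, hw2⟩
          exact Finset.card_pos.mpr ⟨w, hwmem⟩
        have h2' : 2 ≤ (lightNbr v).card := by omega
        obtain ⟨Kv, hK1, hK2⟩ := Finset.exists_subset_card_eq h2'
        exact ⟨Kv, hK1, fun hc => absurd hc.2 hvS, fun _ => hK2⟩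
    · exact ⟨∅, Finset.empty_subset _, fun hc => absurd hc.1 hv, fun hc => absurd hc.1 hv⟩
  choose K hK1 hK2 hK3 using hKex
  -- a maximum matching
  have h0 : (0 : ℕ) ∈ {k | ∃ M : Set (Sym2 V), M ⊆ T.edgeSet ∧ (∀ e ∈ M, ∀ v ∈ e, v ∈ S) ∧
      (∀ e ∈ M, ∀ f ∈ M, e ≠ f → ∀ v, v ∈ e → v ∉ f) ∧ M.ncard = k} :=
    ⟨∅, Set.empty_subset _, by simp, by simp, by simp⟩
  have hmem : matchingNumberOn T S ∈ {k | ∃ M : Set (Sym2 V), M ⊆ T.edgeSet ∧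
      (∀ e ∈ M, ∀ v ∈ e, v ∈ S) ∧
      (∀ e ∈ M, ∀ f ∈ M, e ≠ f → ∀ v, v ∈ e → v ∉ f) ∧ M.ncard = k} :=
    Nat.sSup_mem ⟨0, h0⟩ (matchingNumberOn_bddAbove T S)
  obtain ⟨M, hM1, hM2, hM3, hMc⟩ := hmem
  set Mf := (Set.toFinite M).toFinset with hMfdef
  have hMfmem : ∀ e, e ∈ Mf ↔ e ∈ M := fun e => Set.Finite.mem_toFinset _
  have hMfcard : Mf.card = matchingNumberOn T S := by
    rw [← hMc, ← Set.ncard_coe_finset Mf, Set.Finite.coe_toFinset]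
  have hMfadj : ∀ e ∈ Mf, e ∈ T.edgeSet := fun e he => hM1 ((hMfmem e).mp he)
  have hMfS : ∀ e ∈ Mf, ∀ v ∈ e, v ∈ S := fun e he => hM2 e ((hMfmem e).mp he)
  have hSheavy : ∀ v ∈ S, 2 < T.degree v := by
    intro v hv
    rw [hS] at hv
    have := hv.1
    rwa [ndeg_eq] at this
  -- the path covering
  set H₀ : SimpleGraph V := {
    Adj := fun x y => x ≠ y ∧ ((T.Adj x y ∧ T.degree x ≤ 2 ∧ T.degree y ≤ 2) ∨
      (T.Adj x y ∧ ((2 < T.degree x ∧ y ∈ K x) ∨ (2 < T.degree y ∧ x ∈ K y))) ∨ s(x,y) ∈ Mf)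
    symm := ⟨by
      rintro x y ⟨hne, h⟩
      refine ⟨hne.symm, ?_⟩
      rcases h with ⟨h1, h2, h3⟩ | ⟨h1, h2 | h2⟩ | h1
      · exact Or.inl ⟨h1.symm, h3, h2⟩
      · exact Or.inr (Or.inl ⟨h1.symm, Or.inr h2⟩)
      · exact Or.inr (Or.inl ⟨h1.symm, Or.inl h2⟩)
      · rw [Sym2.eq_swap] at h1
        exact Or.inr (Or.inr h1)⟩
    loopless := ⟨fun x h => h.1 rfl⟩ } with hH₀
  letI : DecidableRel H₀.Adj := Classical.decRel _
  have hH₀T : H₀ ≤ T := by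
    rintro x y ⟨hne, h⟩
    rcases h with ⟨h1, _⟩ | ⟨h1, _⟩ | h1
    · exact h1
    · exact h1
    · exact (mem_edgeSet T).mp (hMfadj _ h1)
  have hadjH : ∀ v w, 2 < T.degree v → (H₀.Adj v w ↔ (w ∈ K v ∨ s(v,w) ∈ Mf)) := by
    intro v w hv
    constructor
    · rintro ⟨hne, h⟩
      rcases h with ⟨h1, h2, h3⟩ | ⟨h1, h2 | h2⟩ | h1
      · omega
      · exact Or.inl h2.2
      · have hvl := (hlightNbrAdj w v (hK1 w h2.2)).2
        omega
      · exact Or.inr h1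
    · intro h
      rcases h with h | h
      · have hlw := hlightNbrAdj v w (hK1 v h)
        exact ⟨hlw.1.ne, Or.inr (Or.inl ⟨hlw.1, Or.inl ⟨hv, h⟩⟩)⟩
      · have hadj : T.Adj v w := (mem_edgeSet T).mp (hMfadj _ h)
        exact ⟨hadj.ne, Or.inr (Or.inr h)⟩
  have hMpart : ∀ v, (Finset.univ.filter (fun w => s(v,w) ∈ Mf)).card ≤ 1 := by
    intro v
    rw [Finset.card_le_one]
    intro w hw w' hw'
    simp only [Finset.mem_filter, Finset.mem_univ, true_and] at hw hw'
    by_contra hne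
    have hef : s(v,w) ≠ s(v,w') := by
      intro hc
      rw [Sym2.eq_iff] at hc
      rcases hc with ⟨_, h⟩ | ⟨h1, h2⟩
      · exact hne h
      · exact hne (h2.trans h1)
    exact hM3 _ ((hMfmem _).mp hw) _ ((hMfmem _).mp hw') hef v
      (Sym2.mem_mk_left _ _) (Sym2.mem_mk_left _ _)
  have hMpartSf : ∀ v w, s(v,w) ∈ Mf → v ∈ Sf := by
    intro v w hvw
    exact (hSmem v).mp (hMfS _ hvw v (Sym2.mem_mk_left _ _))
  have hnbrH : ∀ v, 2 < T.degree v →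
      H₀.neighborFinset v = K v ∪ Finset.univ.filter (fun w => s(v,w) ∈ Mf) := by
    intro v hv
    ext w
    rw [mem_neighborFinset, hadjH v w hv]
    simp
  have hdegH₀ : ∀ v, H₀.degree v ≤ 2 := by
    intro v
    by_cases hv : 2 < T.degree v
    · rw [degree, hnbrH v hv]
      have hle := Finset.card_union_le (K v) (Finset.univ.filter (fun w => s(v,w) ∈ Mf))
      have h1 := hMpart v
      by_cases hvS : (lightNbr v).card = 1
      · have hKeq := hK2 v ⟨hv, hvS⟩
        have : (K v).card = 1 := by rw [hKeq, hvS]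
        omega
      · have hKv2 : (K v).card = 2 := hK3 v ⟨hv, hvS⟩
        have hempty : Finset.univ.filter (fun w => s(v,w) ∈ Mf) = ∅ := by
          rw [Finset.eq_empty_iff_forall_notMem]
          intro w hw
          simp only [Finset.mem_filter, Finset.mem_univ, true_and] at hw
          have hvSf : v ∈ Sf := hMpartSf v w hw
          rw [hSfdef, Finset.mem_filter] at hvSf
          exact hvS hvSf.2
        rw [hempty]
        simp only [Finset.union_empty]
        omega
    · have hsub : H₀.neighborFinset v ⊆ T.neighborFinset v := by
        intro w hw
        rw [mem_neighborFinset] at hw ⊢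
        exact hH₀T hw
      have hcc := Finset.card_le_card hsub
      have hTle : T.degree v ≤ 2 := by omega
      exact le_trans (show H₀.degree v ≤ T.degree v from hcc) hTle
  have hlf : IsLinearForest H₀ :=
    ⟨acyclic_mono hH₀T hT.IsAcyclic, fun v => by rw [ndeg_eq]; exact hdegH₀ v⟩
  -- edge partitions
  set p : V → Prop := fun v => T.degree v ≤ 2 with hp
  have hpartT := card_edge_partition T p
  have hpartH := card_edge_partition H₀ p
  -- piece 1 : light-light edges agree
  have hLL : H₀.edgeFinset.filter (fun e => ∀ v ∈ e, p v)
      = T.edgeFinset.filter (fun e => ∀ v ∈ e, p v) := by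
    ext e
    induction e using Sym2.ind with
    | _ a b =>
    rw [Finset.mem_filter, Finset.mem_filter, mem_edgeFinset, mem_edgeFinset,
      mem_edgeSet, mem_edgeSet]
    constructor
    · rintro ⟨h1, h2⟩
      exact ⟨hH₀T h1, h2⟩
    · rintro ⟨h1, h2⟩
      have ha := h2 a (Sym2.mem_mk_left a b)
      have hb := h2 b (Sym2.mem_mk_right a b)
      exact ⟨⟨h1.ne, Or.inl ⟨h1, ha, hb⟩⟩, h2⟩
  -- piece 2 : heavy-light edges of H₀
  have hHL : H₀.edgeFinset.filter (fun e => (∃ v ∈ e, p v) ∧ (∃ v ∈ e, ¬ p v))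
      = Hvy.biUnion (fun v => (K v).image (fun w => s(v,w))) := by
    ext e
    induction e using Sym2.ind with
    | _ a b =>
    rw [Finset.mem_filter, mem_edgeFinset, mem_edgeSet, Finset.mem_biUnion]
    constructor
    · rintro ⟨h1, ⟨v₁, hv₁, hpv₁⟩, ⟨v₂, hv₂, hpv₂⟩⟩
      rw [Sym2.mem_iff] at hv₁ hv₂
      have hcases : (¬ p a ∧ p b) ∨ (¬ p b ∧ p a) := by
        rcases hv₁ with rfl | rfl <;> rcases hv₂ with rfl | rfl <;> tauto
      rcases hcases with ⟨hha, hlb⟩ | ⟨hhb, hla⟩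
      · have hha' : 2 < T.degree a := by rw [hp] at hha; omega
        rcases (hadjH a b hha').mp h1 with h | h
        · exact ⟨a, Finset.mem_filter.mpr ⟨Finset.mem_univ a, hha'⟩,
            Finset.mem_image.mpr ⟨b, h, rfl⟩⟩
        · have := hSheavy _ (hMfS _ h b (Sym2.mem_mk_right a b))
          rw [hp] at hlb
          omega
      · have hhb' : 2 < T.degree b := by rw [hp] at hhb; omega
        rcases (hadjH b a hhb').mp h1.symm with h | h
        · exact ⟨b, Finset.mem_filter.mpr ⟨Finset.mem_univ b, hhb'⟩,
            Finset.mem_image.mpr ⟨a, h, Sym2.eq_swap⟩⟩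
        · have := hSheavy _ (hMfS _ h a (Sym2.mem_mk_right b a))
          rw [hp] at hla
          omega
    · rintro ⟨v, hv, hmem⟩
      obtain ⟨w, hw, heq⟩ := Finset.mem_image.mp hmem
      have hvheavy : 2 < T.degree v := (Finset.mem_filter.mp hv).2
      have hadj : H₀.Adj v w := (hadjH v w hvheavy).mpr (Or.inl hw)
      have hlw := (hlightNbrAdj v w (hK1 v hw)).2
      rw [Sym2.eq_iff] at heq
      rcases heq with ⟨rfl, rfl⟩ | ⟨rfl, rfl⟩
      · refine ⟨hadj, ⟨w, Sym2.mem_mk_right v w, ?_⟩, ⟨v, Sym2.mem_mk_left v w, ?_⟩⟩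
        · rw [hp]; exact hlw
        · rw [hp]; omega
      · refine ⟨hadj.symm, ⟨w, Sym2.mem_mk_left w v, ?_⟩, ⟨v, Sym2.mem_mk_right w v, ?_⟩⟩
        · rw [hp]; exact hlw
        · rw [hp]; omega
  -- piece 3 : heavy-heavy edges of H₀ are the matching
  have hHH : H₀.edgeFinset.filter (fun e => ∀ v ∈ e, ¬ p v) = Mf := by
    ext e
    induction e using Sym2.ind with
    | _ a b =>
    rw [Finset.mem_filter, mem_edgeFinset, mem_edgeSet]
    constructor
    · rintro ⟨h1, h2⟩
      have hha : 2 < T.degree a := by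
        have := h2 a (Sym2.mem_mk_left a b); rw [hp] at this; omega
      rcases (hadjH a b hha).mp h1 with h | h
      · have h3 := (hlightNbrAdj a b (hK1 a h)).2
        have h4 := h2 b (Sym2.mem_mk_right a b)
        rw [hp] at h4
        omega
      · exact h
    · intro hmem
      have hadj : T.Adj a b := (mem_edgeSet T).mp (hMfadj _ hmem)
      refine ⟨⟨hadj.ne, Or.inr (Or.inr hmem)⟩, ?_⟩
      intro v hv
      have := hSheavy _ (hMfS _ hmem v hv)
      rw [hp]
      omega
  -- piece 4 : heavy-light edges of T
  have hHLT : T.edgeFinset.filter (fun e => (∃ v ∈ e, p v) ∧ (∃ v ∈ e, ¬ p v))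
      = Hvy.biUnion (fun v => (lightNbr v).image (fun w => s(v,w))) := by
    ext e
    induction e using Sym2.ind with
    | _ a b =>
    rw [Finset.mem_filter, mem_edgeFinset, mem_edgeSet, Finset.mem_biUnion]
    constructor
    · rintro ⟨h1, ⟨v₁, hv₁, hpv₁⟩, ⟨v₂, hv₂, hpv₂⟩⟩
      rw [Sym2.mem_iff] at hv₁ hv₂
      have hcases : (¬ p a ∧ p b) ∨ (¬ p b ∧ p a) := by
        rcases hv₁ with rfl | rfl <;> rcases hv₂ with rfl | rfl <;> tauto
      rcases hcases with ⟨hha, hlb⟩ | ⟨hhb, hla⟩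
      · refine ⟨a, Finset.mem_filter.mpr ⟨Finset.mem_univ a, by rw [hp] at hha; omega⟩,
          Finset.mem_image.mpr ⟨b, ?_, rfl⟩⟩
        rw [hlightNbr]
        simp only [Finset.mem_filter, mem_neighborFinset]
        rw [hp] at hlb
        exact ⟨h1, hlb⟩
      · refine ⟨b, Finset.mem_filter.mpr ⟨Finset.mem_univ b, by rw [hp] at hhb; omega⟩,
          Finset.mem_image.mpr ⟨a, ?_, Sym2.eq_swap⟩⟩
        rw [hlightNbr]
        simp only [Finset.mem_filter, mem_neighborFinset]
        rw [hp] at hla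
        exact ⟨h1.symm, hla⟩
    · rintro ⟨v, hv, hmem⟩
      obtain ⟨w, hw, heq⟩ := Finset.mem_image.mp hmem
      have hlw := hlightNbrAdj v w hw
      have hvheavy : 2 < T.degree v := (Finset.mem_filter.mp hv).2
      rw [Sym2.eq_iff] at heq
      rcases heq with ⟨rfl, rfl⟩ | ⟨rfl, rfl⟩
      · exact ⟨hlw.1, ⟨w, Sym2.mem_mk_right v w, by rw [hp]; exact hlw.2⟩,
          ⟨v, Sym2.mem_mk_left v w, by rw [hp]; omega⟩⟩
      · exact ⟨hlw.1.symm, ⟨w, Sym2.mem_mk_left w v, by rw [hp]; exact hlw.2⟩,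
          ⟨v, Sym2.mem_mk_right w v, by rw [hp]; omega⟩⟩
  -- biUnion cards
  have hdisjK : ∀ v ∈ Hvy, ∀ w ∈ K v, w ∉ Hvy := by
    intro v hv w hw hwH
    have := (hlightNbrAdj v w (hK1 v hw)).2
    rw [hHvy, Finset.mem_filter] at hwH
    omega
  have hdisjL : ∀ v ∈ Hvy, ∀ w ∈ lightNbr v, w ∉ Hvy := by
    intro v hv w hw hwH
    have := (hlightNbrAdj v w hw).2
    rw [hHvy, Finset.mem_filter] at hwH
    omega
  have hcardK := card_biUnion_pt Hvy K hdisjK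
  have hcardL := card_biUnion_pt Hvy lightNbr hdisjL
  -- sum of K cards
  have hSfsubHvy : Sf ⊆ Hvy := Finset.filter_subset _ _
  have hsumK : ∑ v ∈ Hvy, (K v).card + Sf.card = 2 * Hvy.card := by
    rw [← Finset.sum_filter_add_sum_filter_not Hvy (fun v => v ∈ Sf) (fun v => (K v).card)]
    have hfilter : Hvy.filter (fun v => v ∈ Sf) = Sf := by
      rw [Finset.filter_mem_eq_inter, Finset.inter_eq_right.mpr hSfsubHvy]
    rw [hfilter]
    have hsum1 : ∑ v ∈ Sf, (K v).card = Sf.card := by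
      rw [Finset.card_eq_sum_ones Sf]
      apply Finset.sum_congr rfl
      intro v hv
      have hv1 : (lightNbr v).card = 1 := (Finset.mem_filter.mp hv).2
      have hv2 : 2 < T.degree v := (Finset.mem_filter.mp (hSfsubHvy hv)).2
      rw [hK2 v ⟨hv2, hv1⟩, hv1]
    have hsum2 : ∑ v ∈ Hvy.filter (fun v => v ∉ Sf), (K v).card
        = 2 * (Hvy.filter (fun v => v ∉ Sf)).card := by
      rw [Finset.card_eq_sum_ones, Finset.mul_sum]
      apply Finset.sum_congr rfl
      intro v hv
      rw [Finset.mem_filter] at hv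
      have hv2 : 2 < T.degree v := (Finset.mem_filter.mp hv.1).2
      have hv1 : (lightNbr v).card ≠ 1 := by
        intro hc
        exact hv.2 (Finset.mem_filter.mpr ⟨hv.1, hc⟩)
      rw [hK3 v ⟨hv2, hv1⟩]
      omega
    have hcards : Sf.card + (Hvy.filter (fun v => v ∉ Sf)).card = Hvy.card := by
      have h := Finset.card_filter_add_card_filter_not
        (s := Hvy) (fun v => v ∈ Sf)
      rw [hfilter] at h
      exact h
    omega
  -- light/heavy neighbour split
  have hnbrsplit : ∀ v, (lightNbr v).card
      + ((T.neighborFinset v).filter (fun w => ¬ T.degree w ≤ 2)).card = T.degree v := by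
    intro v
    exact Finset.card_filter_add_card_filter_not
      (s := T.neighborFinset v) (fun w => T.degree w ≤ 2)
  have hsumsplit : ∑ v ∈ Hvy, (lightNbr v).card
      + ∑ v ∈ Hvy, ((T.neighborFinset v).filter (fun w => ¬ T.degree w ≤ 2)).card
      = ∑ v ∈ Hvy, T.degree v := by
    rw [← Finset.sum_add_distrib]
    exact Finset.sum_congr rfl (fun v _ => hnbrsplit v)
  -- handshake on the heavy-heavy subgraph of T
  have hHN : ∑ v ∈ Hvy, ((T.neighborFinset v).filter (fun w => ¬ T.degree w ≤ 2)).card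
      = 2 * (T.edgeFinset.filter (fun e => ∀ v ∈ e, ¬ p v)).card := by
    set FT : SimpleGraph V := {
      Adj := fun a b => T.Adj a b ∧ ¬ T.degree a ≤ 2 ∧ ¬ T.degree b ≤ 2
      symm := ⟨by rintro a b ⟨h1, h2, h3⟩; exact ⟨h1.symm, h3, h2⟩⟩
      loopless := ⟨fun a h => T.irrefl h.1⟩ } with hFT
    letI : DecidableRel FT.Adj := Classical.decRel _
    have hFTdeg : ∀ v ∈ Hvy, FT.degree v
        = ((T.neighborFinset v).filter (fun w => ¬ T.degree w ≤ 2)).card := by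
      intro v hv
      have hvh : ¬ T.degree v ≤ 2 := by
        have := (Finset.mem_filter.mp hv).2; omega
      have hnb : FT.neighborFinset v
          = (T.neighborFinset v).filter (fun w => ¬ T.degree w ≤ 2) := by
        ext w
        rw [mem_neighborFinset, Finset.mem_filter, mem_neighborFinset]
        constructor
        · rintro ⟨h1, _, h3⟩; exact ⟨h1, h3⟩
        · rintro ⟨h1, h2⟩; exact ⟨h1, hvh, h2⟩
      exact congrArg Finset.card hnb
    have hFTdeg0 : ∀ v ∉ Hvy, FT.degree v = 0 := by
      intro v hv
      have hnb : FT.neighborFinset v = (∅ : Finset V) := by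
        rw [Finset.eq_empty_iff_forall_notMem]
        intro w hw
        rw [mem_neighborFinset] at hw
        apply hv
        rw [hHvy, Finset.mem_filter]
        refine ⟨Finset.mem_univ v, ?_⟩
        have := hw.2.1
        omega
      have := congrArg Finset.card hnb
      simpa using this
    have hhs := FT.sum_degrees_eq_twice_card_edges
    have hFTedges : FT.edgeFinset = T.edgeFinset.filter (fun e => ∀ v ∈ e, ¬ p v) := by
      ext e
      induction e using Sym2.ind with
      | _ a b =>
      rw [mem_edgeFinset, mem_edgeSet, Finset.mem_filter, mem_edgeFinset, mem_edgeSet]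
      constructor
      · rintro ⟨h1, h2, h3⟩
        refine ⟨h1, ?_⟩
        intro v hv
        rw [hp]
        rcases Sym2.mem_iff.mp hv with rfl | rfl
        · exact h2
        · exact h3
      · rintro ⟨h1, h2⟩
        have ha := h2 a (Sym2.mem_mk_left a b)
        have hb := h2 b (Sym2.mem_mk_right a b)
        rw [hp] at ha hb
        exact ⟨h1, ha, hb⟩
    have hsubsum : ∑ v ∈ Hvy, FT.degree v = ∑ v, FT.degree v := by
      apply Finset.sum_subset (Finset.subset_univ Hvy)
      intro v _ hv
      exact hFTdeg0 v hv
    calc ∑ v ∈ Hvy, ((T.neighborFinset v).filter (fun w => ¬ T.degree w ≤ 2)).card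
        = ∑ v ∈ Hvy, FT.degree v := by
          exact (Finset.sum_congr rfl (fun v hv => (hFTdeg v hv).symm))
      _ = ∑ v, FT.degree v := hsubsum
      _ = 2 * FT.edgeFinset.card := hhs
      _ = 2 * (T.edgeFinset.filter (fun e => ∀ v ∈ e, ¬ p v)).card := by rw [hFTedges]
  -- global degree sum
  have hsumdeg := sumdeg T hT h2
  rw [← hHvy] at hsumdeg
  -- edge counts of H₀ and T
  have hnumP : numPaths H₀ + H₀.edgeFinset.card = Fintype.card V := by
    have := acyclic_card_cc H₀ hlf.1
    rwa [show H₀.edgeSet.ncard = H₀.edgeFinset.card by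
      rw [← Set.ncard_coe_finset H₀.edgeFinset, coe_edgeFinset]] at this
  have hTE : T.edgeFinset.card + 1 = Fintype.card V := hT.card_edgeFinset
  have hQp : (T.edgeFinset.filter Q).card
      = (T.edgeFinset.filter (fun e => ∀ v ∈ e, ¬ p v)).card := rfl
  refine ⟨H₀, hH₀T, hlf, ?_⟩
  rw [hl, hscard, hhe]
  rw [hLL, hHL, hHH] at hpartH
  rw [hHLT] at hpartT
  rw [hcardK] at hpartH
  rw [hcardL] at hpartT
  rw [hMfcard] at hpartH
  rw [hQp]
  omega


end Main

/-- **Theorem (Statement 2).** Let `T` be a tree with `ℓ ≥ 2` leaves in which each heavy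
vertex has at least one light neighbor.  Let `S` be the set of heavy vertices with
exactly one light neighbor, `h` the number of heavy edges, `s = |S|`, and `t` the size
of a maximum matching of the subgraph induced by `S`.  Then `P(T) = ℓ − h + s − t − 1`. -/
theorem tree_pathCoverNumber_formula {V : Type*} [Fintype V] (T : SimpleGraph V)
    (hT : T.IsTree) (hl : 2 ≤ numLeaves T)
    (hh : ∀ v, 2 < ndeg T v → ∃ w, T.Adj v w ∧ ndeg T w ≤ 2)
    (S : Set V)
    (hS : S = {v | 2 < ndeg T v ∧ {w | T.Adj v w ∧ ndeg T w ≤ 2}.ncard = 1}) :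
    (pathCoverNumber T : ℤ) =
      numLeaves T - numHeavyEdges T + S.ncard - matchingNumberOn T S - 1 := by
  classical
  letI : DecidableRel T.Adj := Classical.decRel _
  have h2 : 2 ≤ Fintype.card V := by
    have h1 := Set.ncard_le_ncard (Set.subset_univ {v | ndeg T v = 1}) (Set.toFinite _)
    rw [Set.ncard_univ, Nat.card_eq_fintype_card] at h1
    exact le_trans hl h1
  have hh' : ∀ v, 2 < T.degree v → ∃ w, T.Adj v w ∧ T.degree w ≤ 2 := by
    intro v hv
    obtain ⟨w, hw1, hw2⟩ := hh v (by rw [ndeg_eq]; exact hv)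
    exact ⟨w, hw1, by rwa [ndeg_eq] at hw2⟩
  obtain ⟨H₀, hH₀T, hlf₀, heq₀⟩ := UB T hT h2 hh' S hS
  have hmemP : numPaths H₀ ∈ {k | ∃ H ≤ T, IsLinearForest H ∧ numPaths H = k} :=
    ⟨H₀, hH₀T, hlf₀, rfl⟩
  have hle1 : pathCoverNumber T ≤ numPaths H₀ := Nat.sInf_le hmemP
  have hmem2 : pathCoverNumber T ∈ {k | ∃ H ≤ T, IsLinearForest H ∧ numPaths H = k} :=
    Nat.sInf_mem ⟨_, hmemP⟩
  obtain ⟨H₁, hH₁T, hlf₁, heq₁⟩ := hmem2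
  have hlb := LB T H₁ hT h2 S hS hH₁T hlf₁
  rw [heq₁] at hlb
  omega

end PaperPC
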